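/- Let 1 < α ≤ 2, 0 ≤ β ≤ α - 1, a < b, K > 0, and let f : [a,b] × ℝ → ℝ be continuous with |f(t,u₁) - f(t,u₂)| ≤ K|u₁ - u₂| for all t ∈ [a,b] and u₁, u₂ ∈ ℝ. If b - a < ((α-β)^α Γ(α+1)/(K(α-1)^(α-1)))^(1/α), then there exists a unique continuous u : [a,b] → ℝ with u(t) = ∫ₐᵇ G(t,s) f(s,u(s)) ds for all t ∈ [a,b]. -/

import Mathlib

noncomputable def G (a b α β t s : ℝ) : ℝ :=
  if s ≤ t then
    (1 / Real.Gamma α) *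
      ((t - a) ^ (α - 1) * (b - s) ^ (α - 1 - β) / (b - a) ^ (α - 1 - β) -
        (t - s) ^ (α - 1))
  else
    (1 / Real.Gamma α) *
      ((t - a) ^ (α - 1) * (b - s) ^ (α - 1 - β) / (b - a) ^ (α - 1 - β))

section helpers

lemma cont_rpow {q : ℝ} (hq : 0 ≤ q) : Continuous fun x : ℝ => x ^ q := by
  rcases eq_or_lt_of_le hq with h | h
  · simp only [← h, Real.rpow_zero]; exact continuous_const
  · exact continuous_iff_continuousAt.2 fun x => Real.continuousAt_rpow_const x q (Or.inr h.le)

lemma G_cont {a b α β : ℝ} (hα : 1 < α) (hβα : β ≤ α - 1) :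
    Continuous fun p : ℝ × ℝ => G a b α β p.1 p.2 := by
  have h1 : (0:ℝ) < α - 1 := by linarith
  have h2 : (0:ℝ) ≤ α - 1 - β := by linarith
  have c1 : Continuous fun p : ℝ × ℝ =>
      (1 / Real.Gamma α) * ((p.1 - a) ^ (α - 1) * (b - p.2) ^ (α - 1 - β) / (b - a) ^ (α - 1 - β)) :=
    continuous_const.mul ((((cont_rpow h1.le).comp (continuous_fst.sub continuous_const)).mul
      ((cont_rpow h2).comp (continuous_const.sub continuous_snd))).div_const _)
  have c2 : Continuous fun p : ℝ × ℝ => (1 / Real.Gamma α) * (p.1 - p.2) ^ (α - 1) :=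
    continuous_const.mul ((cont_rpow h1.le).comp (continuous_fst.sub continuous_snd))
  unfold G
  simp only [mul_sub]
  apply Continuous.if_le (c1.sub c2) c1 continuous_snd continuous_fst
  intro p hp
  have : p.1 - p.2 = 0 := by rw [hp]; ring
  simp only [Pi.sub_apply]
  rw [this, Real.zero_rpow (by linarith : α - 1 ≠ 0), mul_zero, sub_zero]

lemma G_nonneg {a b α β : ℝ} (hα : 1 < α) (hβ : 0 ≤ β) (hβα : β ≤ α - 1) (hab : a < b)
    {t s : ℝ} (ht : t ∈ Set.Icc a b) (hs : s ∈ Set.Icc a b) : 0 ≤ G a b α β t s := by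
  have h1 : (0:ℝ) < α - 1 := by linarith
  have h2 : (0:ℝ) ≤ α - 1 - β := by linarith
  have hΓ : 0 < Real.Gamma α := Real.Gamma_pos_of_pos (by linarith)
  have hba : (0:ℝ) < b - a := by linarith
  have hbs : (0:ℝ) ≤ b - s := by linarith [hs.2]
  have hta : (0:ℝ) ≤ t - a := by linarith [ht.1]
  unfold G
  split_ifs with h
  · have hts : (0:ℝ) ≤ t - s := by linarith
    have key : t - s ≤ (t - a) * ((b - s) / (b - a)) := by
      rw [mul_div_assoc'] at *
      rw [le_div_iff₀ hba]
      nlinarith [mul_nonneg (sub_nonneg.2 ht.2) (sub_nonneg.2 hs.1)]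
    have hr0 : (0:ℝ) ≤ (b - s) / (b - a) := div_nonneg hbs hba.le
    have hr1 : (b - s) / (b - a) ≤ 1 := by
      rw [div_le_one hba]; linarith [hs.1]
    have step1 : (t - s) ^ (α - 1) ≤ ((t - a) * ((b - s) / (b - a))) ^ (α - 1) :=
      Real.rpow_le_rpow hts key h1.le
    have step2 : ((t - a) * ((b - s) / (b - a))) ^ (α - 1)
        = (t - a) ^ (α - 1) * ((b - s) / (b - a)) ^ (α - 1) :=
      Real.mul_rpow hta hr0
    have step3 : ((b - s) / (b - a)) ^ (α - 1) ≤ ((b - s) / (b - a)) ^ (α - 1 - β) := by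
      rcases eq_or_lt_of_le hr0 with h0 | h0
      · rw [← h0, Real.zero_rpow h1.ne']
        exact Real.rpow_nonneg le_rfl _
      · exact Real.rpow_le_rpow_of_exponent_ge h0 hr1 (by linarith)
    have step4 : (t - a) ^ (α - 1) * ((b - s) / (b - a)) ^ (α - 1 - β)
        = (t - a) ^ (α - 1) * (b - s) ^ (α - 1 - β) / (b - a) ^ (α - 1 - β) := by
      rw [Real.div_rpow hbs hba.le]; ring
    have : (t - s) ^ (α - 1) ≤ (t - a) ^ (α - 1) * (b - s) ^ (α - 1 - β) / (b - a) ^ (α - 1 - β) := by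
      calc (t - s) ^ (α - 1) ≤ (t - a) ^ (α - 1) * ((b - s) / (b - a)) ^ (α - 1) := by
            rw [← step2]; exact step1
        _ ≤ (t - a) ^ (α - 1) * ((b - s) / (b - a)) ^ (α - 1 - β) :=
            mul_le_mul_of_nonneg_left step3 (Real.rpow_nonneg hta _)
        _ = _ := step4
    have := sub_nonneg.2 this
    positivity
  · positivity

lemma G_integral {α β a b : ℝ} (hα : 1 < α) (hβα : β ≤ α - 1) (hab : a < b)
    {t : ℝ} (ht : t ∈ Set.Icc a b) :
    ∫ s in a..b, G a b α β t s =
      (1 / Real.Gamma α) * ((t - a) ^ (α - 1) * (b - a) / (α - β) - (t - a) ^ α / α) := by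
  have h1 : (0:ℝ) < α - 1 := by linarith
  have h2 : (0:ℝ) ≤ α - 1 - β := by linarith
  have hΓ : 0 < Real.Gamma α := Real.Gamma_pos_of_pos (by linarith)
  have hba : (0:ℝ) < b - a := by linarith
  set c : ℝ := 1 / Real.Gamma α with hc
  set p : ℝ := α - 1 - β with hpdef
  set P : ℝ → ℝ := fun s => c * ((t - a) ^ (α - 1) * (b - s) ^ p / (b - a) ^ p) with hP
  set Q : ℝ → ℝ := fun s => if s ≤ t then c * (t - s) ^ (α - 1) else 0 with hQ
  have hGPQ : ∀ s, G a b α β t s = P s - Q s := by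
    intro s
    unfold G
    simp only [hP, hQ]
    split_ifs with h <;> ring
  have hPcont : Continuous P :=
    continuous_const.mul ((continuous_const.mul
      ((cont_rpow h2).comp (continuous_const.sub continuous_id))).div_const _)
  have hQcont : Continuous Q := by
    apply Continuous.if_le
      (continuous_const.mul ((cont_rpow h1.le).comp (continuous_const.sub continuous_id)))
      continuous_const continuous_id continuous_const
    intro x hx
    simp only [id_eq] at hx
    simp only [Pi.mul_apply, Pi.sub_apply, Function.comp_apply, id_eq]
    rw [hx, sub_self, Real.zero_rpow h1.ne', mul_zero]
  have intP : IntervalIntegrable P MeasureTheory.volume a b := hPcont.intervalIntegrable _ _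
  have intQab : IntervalIntegrable Q MeasureTheory.volume a b := hQcont.intervalIntegrable _ _
  have eqint : ∫ s in a..b, G a b α β t s = (∫ s in a..b, P s) - ∫ s in a..b, Q s := by
    rw [← intervalIntegral.integral_sub intP intQab]
    apply intervalIntegral.integral_congr
    intro s _
    exact hGPQ s
  have intP_eq : (∫ s in a..b, P s) = c * ((t - a) ^ (α - 1) * (b - a) / (α - β)) := by
    have e1 : ∀ s : ℝ, P s = (c * (t - a) ^ (α - 1) / (b - a) ^ p) * (b - s) ^ p := by
      intro s; simp only [hP]; ring
    simp only [e1]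
    rw [intervalIntegral.integral_const_mul]
    have e2 : (∫ s in a..b, (b - s) ^ p) = ∫ x in (0:ℝ)..(b - a), x ^ p := by
      have := intervalIntegral.integral_comp_sub_left (a := a) (b := b) (fun x : ℝ => x ^ p) b
      simpa using this
    have hbap : (0:ℝ) < (b - a) ^ p := Real.rpow_pos_of_pos hba _
    have e3 : (b - a) ^ (p + 1) = (b - a) ^ p * (b - a) := by
      rw [Real.rpow_add_one hba.ne']
    have hαβ : p + 1 = α - β := by rw [hpdef]; ring
    have hαβ0 : α - β ≠ 0 := by intro h; rw [hpdef] at *; linarith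
    rw [e2, integral_rpow (Or.inl (by linarith : (-1:ℝ) < p)),
      Real.zero_rpow (by linarith : p + 1 ≠ 0), sub_zero, e3, hαβ]
    field_simp
  have intQ_eq : (∫ s in a..b, Q s) = c * ((t - a) ^ α / α) := by
    have hsplit : (∫ s in a..b, Q s) = (∫ s in a..t, Q s) + ∫ s in t..b, Q s := by
      rw [intervalIntegral.integral_add_adjacent_intervals
        (hQcont.intervalIntegrable _ _) (hQcont.intervalIntegrable _ _)]
    have hright : (∫ s in t..b, Q s) = 0 := by
      have : Set.EqOn Q (fun _ => (0:ℝ)) (Set.uIcc t b) := by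
        intro s hs
        rw [Set.uIcc_of_le ht.2] at hs
        simp only [hQ]
        split_ifs with h
        · have : s = t := le_antisymm h hs.1
          rw [this, sub_self, Real.zero_rpow h1.ne', mul_zero]
        · rfl
      rw [intervalIntegral.integral_congr this]
      simp
    have hleft : (∫ s in a..t, Q s) = c * ((t - a) ^ α / α) := by
      have : Set.EqOn Q (fun s => c * (t - s) ^ (α - 1)) (Set.uIcc a t) := by
        intro s hs
        rw [Set.uIcc_of_le ht.1] at hs
        simp only [hQ, if_pos hs.2]
      rw [intervalIntegral.integral_congr this, intervalIntegral.integral_const_mul]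
      have e2 : (∫ s in a..t, (t - s) ^ (α - 1)) = ∫ x in (0:ℝ)..(t - a), x ^ (α - 1) := by
        have := intervalIntegral.integral_comp_sub_left (a := a) (b := t) (fun x : ℝ => x ^ (α - 1)) t
        simpa using this
      rw [e2, integral_rpow (Or.inl (by linarith : (-1:ℝ) < α - 1)),
        Real.zero_rpow (by linarith : α - 1 + 1 ≠ 0)]
      have : α - 1 + 1 = α := by ring
      rw [this]
      ring
    rw [hsplit, hright, hleft, add_zero]
  rw [eqint, intP_eq, intQ_eq]
  ring

lemma young_bound {α c x : ℝ} (hα : 1 < α) (hc : 0 < c) (hx : 0 ≤ x) :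
    c * x ^ (α - 1) - x ^ α / α ≤ (α - 1) ^ (α - 1) * c ^ α / α := by
  have h1 : (0:ℝ) < α - 1 := by linarith
  have hα0 : (0:ℝ) < α := by linarith
  set lam : ℝ := (α - 1) ^ (-(α - 1) / α) with hlamdef
  have hlam : 0 < lam := Real.rpow_pos_of_pos h1 _
  have hpq : (α / (α - 1)).HolderConjugate α := by
    rw [Real.holderConjugate_iff]
    constructor
    · rw [lt_div_iff₀ h1]; linarith
    · rw [inv_div]; field_simp; ring
  have h := Real.young_inequality_of_nonneg
    (mul_nonneg hlam.le (Real.rpow_nonneg hx (α - 1))) (div_nonneg hc.le hlam.le) hpq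
  have lhs_eq : lam * x ^ (α - 1) * (c / lam) = c * x ^ (α - 1) := by
    field_simp
  have ep : (-(α - 1) / α) * (α / (α - 1)) = -1 := by field_simp
  have ap : (α - 1) * (α / (α - 1)) = α := by field_simp
  have t1 : (lam * x ^ (α - 1)) ^ (α / (α - 1)) = (α - 1)⁻¹ * x ^ α := by
    rw [Real.mul_rpow hlam.le (Real.rpow_nonneg hx _), hlamdef,
      ← Real.rpow_mul h1.le, ← Real.rpow_mul hx, ep, ap, Real.rpow_neg_one]
  have eα : (-(α - 1) / α) * α = -(α - 1) := by field_simp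
  have t2 : (c / lam) ^ α = (α - 1) ^ (α - 1) * c ^ α := by
    rw [Real.div_rpow hc.le hlam.le, hlamdef, ← Real.rpow_mul h1.le, eα,
      Real.rpow_neg h1.le]
    field_simp
  rw [lhs_eq, t1, t2] at h
  have first : (α - 1)⁻¹ * x ^ α / (α / (α - 1)) = x ^ α / α := by
    field_simp
  rw [first] at h
  linarith

lemma G_integral_le {α β a b : ℝ} (hα : 1 < α) (hβ : 0 ≤ β) (hβα : β ≤ α - 1) (hab : a < b)
    {t : ℝ} (ht : t ∈ Set.Icc a b) :
    ∫ s in a..b, G a b α β t s ≤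
      (α - 1) ^ (α - 1) * (b - a) ^ α / ((α - β) ^ α * Real.Gamma (α + 1)) := by
  have h1 : (0:ℝ) < α - 1 := by linarith
  have hα0 : (0:ℝ) < α := by linarith
  have hΓ : 0 < Real.Gamma α := Real.Gamma_pos_of_pos hα0
  have hba : (0:ℝ) < b - a := by linarith
  have hαβ : (0:ℝ) < α - β := by linarith
  have hta : (0:ℝ) ≤ t - a := by linarith [ht.1]
  rw [G_integral hα hβα hab ht]
  have hc : (0:ℝ) < (b - a) / (α - β) := by positivity
  have hy := young_bound hα hc hta
  have e1 : (t - a) ^ (α - 1) * (b - a) / (α - β)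
      = ((b - a) / (α - β)) * (t - a) ^ (α - 1) := by ring
  rw [e1]
  calc (1 / Real.Gamma α) * (((b - a) / (α - β)) * (t - a) ^ (α - 1) - (t - a) ^ α / α)
      ≤ (1 / Real.Gamma α) * ((α - 1) ^ (α - 1) * ((b - a) / (α - β)) ^ α / α) :=
        mul_le_mul_of_nonneg_left hy (by positivity)
    _ = (α - 1) ^ (α - 1) * (b - a) ^ α / ((α - β) ^ α * Real.Gamma (α + 1)) := by
        rw [Real.div_rpow hba.le hαβ.le, Real.Gamma_add_one hα0.ne']
        have hd : (0:ℝ) < (α - β) ^ α := Real.rpow_pos_of_pos hαβ _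
        field_simp

end helpers

theorem stmt_12 (α β a b K : ℝ) (hα : 1 < α) (hα2 : α ≤ 2) (hβ : 0 ≤ β)
    (hβα : β ≤ α - 1) (hab : a < b) (hK : 0 < K) (f : ℝ → ℝ → ℝ)
    (hf : Continuous fun p : ℝ × ℝ => f p.1 p.2)
    (hLip : ∀ t ∈ Set.Icc a b, ∀ u₁ u₂ : ℝ, |f t u₁ - f t u₂| ≤ K * |u₁ - u₂|)
    (hba : b - a <
      ((α - β) ^ α * Real.Gamma (α + 1) / (K * (α - 1) ^ (α - 1))) ^ (1 / α)) :
    ∃! u : ℝ → ℝ, ContinuousOn u (Set.Icc a b) ∧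
      (∀ t, t ∉ Set.Icc a b → u t = 0) ∧
      ∀ t ∈ Set.Icc a b, u t = ∫ s in a..b, G a b α β t s * f s (u s) := by
  have hα0 : (0:ℝ) < α := by linarith
  have h1 : (0:ℝ) < α - 1 := by linarith
  have hle : a ≤ b := hab.le
  have hba' : (0:ℝ) < b - a := by linarith
  have hΓ1 : 0 < Real.Gamma (α + 1) := Real.Gamma_pos_of_pos (by linarith)
  have hαβ : (0:ℝ) < α - β := by linarith
  have hE : (0:ℝ) < (α - 1) ^ (α - 1) := Real.rpow_pos_of_pos h1 _
  have hD : (0:ℝ) < (α - β) ^ α := Real.rpow_pos_of_pos hαβ _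
  have hbaα : (0:ℝ) < (b - a) ^ α := Real.rpow_pos_of_pos hba' _
  set C : ℝ := (α - 1) ^ (α - 1) * (b - a) ^ α / ((α - β) ^ α * Real.Gamma (α + 1)) with hCdef
  have hC : 0 < C := by rw [hCdef]; positivity
  -- the contraction constant K * C < 1
  have hKC : K * C < 1 := by
    have hR : (0:ℝ) < (α - β) ^ α * Real.Gamma (α + 1) / (K * (α - 1) ^ (α - 1)) := by positivity
    have h3 : (b - a) ^ α <
        (((α - β) ^ α * Real.Gamma (α + 1) / (K * (α - 1) ^ (α - 1))) ^ (1 / α)) ^ α :=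
      Real.rpow_lt_rpow hba'.le hba hα0
    rw [← Real.rpow_mul hR.le, one_div, inv_mul_cancel₀ hα0.ne', Real.rpow_one] at h3
    have hKE : (0:ℝ) < K * (α - 1) ^ (α - 1) := by positivity
    rw [lt_div_iff₀' hKE] at h3
    have e : K * C = K * (α - 1) ^ (α - 1) * (b - a) ^ α / ((α - β) ^ α * Real.Gamma (α + 1)) := by
      rw [hCdef]; ring
    rw [e, div_lt_one (by positivity)]
    exact h3
  -- setup the complete metric space of continuous functions on [a,b]
  haveI : Nonempty (Set.Icc a b) := Set.Nonempty.to_subtype (Set.nonempty_Icc.2 hle)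
  set ext : C(Set.Icc a b, ℝ) → ℝ → ℝ := fun u => Set.IccExtend hle u with hext
  have ext_cont : ∀ u : C(Set.Icc a b, ℝ), Continuous (ext u) :=
    fun u => u.continuous.comp continuous_projIcc
  have ext_eq : ∀ u : C(Set.Icc a b, ℝ), ∀ s, ∀ hs : s ∈ Set.Icc a b, ext u s = u ⟨s, hs⟩ :=
    fun u s hs => Set.IccExtend_of_mem hle u hs
  have integrand_cont : ∀ u : C(Set.Icc a b, ℝ),
      Continuous (Function.uncurry fun (t : Set.Icc a b) (s : ℝ) =>
        G a b α β (↑t) s * f s (ext u s)) := by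
    intro u
    apply Continuous.mul
    · exact (G_cont hα hβα).comp
        ((continuous_subtype_val.comp continuous_fst).prodMk continuous_snd)
    · exact hf.comp (continuous_snd.prodMk ((ext_cont u).comp continuous_snd))
  set Φ : C(Set.Icc a b, ℝ) → C(Set.Icc a b, ℝ) := fun u =>
    ⟨fun t => ∫ s in a..b, G a b α β (↑t) s * f s (ext u s),
      intervalIntegral.continuous_parametric_intervalIntegral_of_continuous'
        (integrand_cont u) a b⟩ with hΦ
  have Φ_apply : ∀ u : C(Set.Icc a b, ℝ), ∀ t : Set.Icc a b,
      Φ u t = ∫ s in a..b, G a b α β (↑t) s * f s (ext u s) := fun u t => rfl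
  have int_integrand : ∀ (u : C(Set.Icc a b, ℝ)) (t : Set.Icc a b),
      IntervalIntegrable (fun s => G a b α β (↑t) s * f s (ext u s))
        MeasureTheory.volume a b := by
    intro u t
    apply Continuous.intervalIntegrable
    exact (((G_cont hα hβα).comp (continuous_const.prodMk continuous_id)).mul
      (hf.comp (continuous_id.prodMk (ext_cont u))))
  have intG : ∀ t : Set.Icc a b,
      IntervalIntegrable (fun s => G a b α β (↑t) s) MeasureTheory.volume a b := by
    intro t
    exact ((G_cont hα hβα).comp (continuous_const.prodMk continuous_id)).intervalIntegrable _ _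
  have hGle : ∀ t : Set.Icc a b, (∫ s in a..b, G a b α β (↑t) s) ≤ C :=
    fun t => G_integral_le hα hβ hβα hab t.2
  -- Lipschitz estimate
  have hdist : ∀ u v : C(Set.Icc a b, ℝ), dist (Φ u) (Φ v) ≤ K * C * dist u v := by
    intro u v
    rw [ContinuousMap.dist_le (by positivity)]
    intro x
    rw [Real.dist_eq, Φ_apply, Φ_apply,
      ← intervalIntegral.integral_sub (int_integrand u x) (int_integrand v x)]
    have cu : Continuous fun s => G a b α β (↑x) s * f s (ext u s) :=
      (((G_cont hα hβα).comp (continuous_const.prodMk continuous_id)).mul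
        (hf.comp (continuous_id.prodMk (ext_cont u))))
    have cv : Continuous fun s => G a b α β (↑x) s * f s (ext v s) :=
      (((G_cont hα hβα).comp (continuous_const.prodMk continuous_id)).mul
        (hf.comp (continuous_id.prodMk (ext_cont v))))
    calc |∫ s in a..b, (G a b α β (↑x) s * f s (ext u s) - G a b α β (↑x) s * f s (ext v s))|
        ≤ ∫ s in a..b, |G a b α β (↑x) s * f s (ext u s) - G a b α β (↑x) s * f s (ext v s)| :=
          intervalIntegral.abs_integral_le_integral_abs hle
      _ ≤ ∫ s in a..b, G a b α β (↑x) s * (K * dist u v) := by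
          apply intervalIntegral.integral_mono_on hle ((cu.sub cv).abs.intervalIntegrable _ _)
            ((intG x).mul_const _)
          intro s hs
          simp only [Pi.sub_apply]
          rw [← mul_sub, abs_mul, abs_of_nonneg (G_nonneg hα hβ hβα hab x.2 hs)]
          apply mul_le_mul_of_nonneg_left _ (G_nonneg hα hβ hβα hab x.2 hs)
          calc |f s (ext u s) - f s (ext v s)| ≤ K * |ext u s - ext v s| :=
                hLip s hs _ _
            _ ≤ K * dist u v := by
                apply mul_le_mul_of_nonneg_left _ hK.le
                rw [ext_eq u s hs, ext_eq v s hs, ← Real.dist_eq]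
                exact ContinuousMap.dist_apply_le_dist _
      _ = (∫ s in a..b, G a b α β (↑x) s) * (K * dist u v) := by
          rw [intervalIntegral.integral_mul_const]
      _ ≤ C * (K * dist u v) :=
          mul_le_mul_of_nonneg_right (hGle x) (by positivity)
      _ = K * C * dist u v := by ring
  -- contraction
  set q : NNReal := ⟨K * C, by positivity⟩ with hq
  have hcontr : ContractingWith q Φ := by
    constructor
    · rw [← NNReal.coe_lt_coe]
      exact_mod_cast hKC
    · exact LipschitzWith.of_dist_le_mul hdist
  set u₀ : C(Set.Icc a b, ℝ) := ContractingWith.fixedPoint Φ hcontr with hu₀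
  have hu₀fix : Φ u₀ = u₀ := hcontr.fixedPoint_isFixedPt
  set U : ℝ → ℝ := fun t => if ht : t ∈ Set.Icc a b then u₀ ⟨t, ht⟩ else 0 with hU
  have hUeq : ∀ s, ∀ hs : s ∈ Set.Icc a b, U s = u₀ ⟨s, hs⟩ := by
    intro s hs; rw [hU]; simp [hs]
  refine ⟨U, ⟨?_, ?_, ?_⟩, ?_⟩
  · -- continuity on Icc
    apply (ext_cont u₀).continuousOn.congr
    intro s hs
    rw [hUeq s hs, ext_eq u₀ s hs]
  · intro t ht
    rw [hU]; simp [ht]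
  · intro t ht
    rw [hUeq t ht, ← hu₀fix, Φ_apply]
    apply intervalIntegral.integral_congr
    intro s hs
    rw [Set.uIcc_of_le hle] at hs
    simp only [ext_eq u₀ s hs, hUeq s hs]
  · -- uniqueness
    rintro v ⟨hv1, hv2, hv3⟩
    set v₀ : C(Set.Icc a b, ℝ) := ⟨(Set.Icc a b).restrict v, hv1.restrict⟩ with hv₀
    have hv₀fix : Φ v₀ = v₀ := by
      ext x
      rw [Φ_apply]
      have : v₀ x = v ↑x := rfl
      rw [this, hv3 ↑x x.2]
      apply intervalIntegral.integral_congr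
      intro s hs
      rw [Set.uIcc_of_le hle] at hs
      simp only [ext_eq v₀ s hs]
      rfl
    have hveq : v₀ = u₀ := hcontr.fixedPoint_unique hv₀fix
    funext t
    by_cases ht : t ∈ Set.Icc a b
    · rw [hUeq t ht]
      have : v t = v₀ ⟨t, ht⟩ := rfl
      rw [this, hveq]
    · rw [hv2 t ht, hU]; simp [ht]
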